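/- Let K be a compact subset of the open right half-plane {z ∈ ℂ : Re z > 0}. Then there exists M > 0 such that for every z ∈ K, every real c ≥ 0 and every integer n ≥ 0, |φ_n(z;c)| < M · u^{n/2}/Γ(1 + n/2), where u := |z|²/Re z. -/

import Mathlib

open MeasureTheory Real Set


/-- `φ_n(z;c) = z^{-3/2}/(2√π (n+1)!) ∫_c^∞ e^{-τ²/(4z)} τ (τ-c)^{n+1} dτ` for complex `z`
(principal branch of `z^{-3/2}`). -/
noncomputable def phiC (n : ℕ) (c : ℝ) (z : ℂ) : ℂ :=
  z ^ (-(3 : ℂ) / 2) / (2 * (Real.sqrt Real.pi : ℂ) * (Nat.factorial (n + 1) : ℂ)) *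
    ∫ τ in Set.Ioi c, Complex.exp (-(τ : ℂ) ^ 2 / (4 * z)) * (τ : ℂ) * ((τ : ℂ) - (c : ℂ)) ^ (n + 1)

private lemma gamma_aux (n : ℕ) :
    Real.Gamma (1 + (n:ℝ)/2) * Real.Gamma (((n:ℝ)+3)/2) =
      (Nat.factorial (n+1) : ℝ) * 2 ^ (-(n:ℝ)-1) * Real.sqrt Real.pi := by
  have h := Real.Gamma_mul_Gamma_add_half (1 + (n:ℝ)/2)
  have h1 : 1 + (n:ℝ)/2 + 1/2 = ((n:ℝ)+3)/2 := by ring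
  have h2 : 2 * (1 + (n:ℝ)/2) = (n:ℝ) + 2 := by ring
  have h3 : Real.Gamma ((n:ℝ)+2) = (Nat.factorial (n+1) : ℝ) := by
    have := Real.Gamma_nat_eq_factorial (n+1)
    rw [← this]
    congr 1
    push_cast
    ring
  rw [h1, h2, h3] at h
  rw [h]
  congr 2
  ring

set_option maxHeartbeats 1000000 in
private lemma phiC_le (z : ℂ) (hz : 0 < z.re) {c : ℝ} (hc : 0 ≤ c) (n : ℕ) :
    ‖phiC n c z‖ ≤ (‖z‖ / z.re) ^ ((3:ℝ)/2) *
      ((‖z‖ ^ 2 / z.re) ^ ((n:ℝ)/2) / Real.Gamma (1 + (n:ℝ)/2)) := by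
  have hz0 : z ≠ 0 := fun h => by simp [h] at hz
  have ha : (0:ℝ) < ‖z‖ := norm_pos_iff.mpr hz0
  set b : ℝ := z.re / (4 * ‖z‖^2) with hbdef
  have hb : 0 < b := by positivity
  have hn2 : (-1:ℝ) < (n:ℝ) + 2 := by
    have : (0:ℝ) ≤ (n:ℝ) := Nat.cast_nonneg n
    linarith
  set g : ℝ → ℝ := fun x => x ^ ((n:ℝ)+2) * Real.exp (-b * x^2) with hgdef
  have hgint : Integrable g := integrable_rpow_mul_exp_neg_mul_sq hb hn2
  -- real part computation
  have hre : ∀ τ : ℝ, (-(τ:ℂ)^2 / (4*z)).re = -b * τ^2 := by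
    intro τ
    have he : -(τ:ℂ)^2 / (4*z) = ((-(τ^2) : ℝ) : ℂ) * (4*z)⁻¹ := by push_cast; ring
    have h5 : Complex.normSq (4*z) = 16 * ‖z‖^2 := by
      rw [map_mul]
      rw [Complex.normSq_eq_norm_sq, Complex.normSq_eq_norm_sq]
      simp
      norm_num
    rw [he, Complex.re_ofReal_mul, Complex.inv_re, h5]
    have : (4*z).re = 4 * z.re := by simp
    rw [this, hbdef]
    field_simp
    ring
  -- pointwise bound
  have hnorm : ∀ τ ∈ Ioi c, ‖Complex.exp (-(τ:ℂ)^2/(4*z)) * (τ:ℂ) * ((τ:ℂ) - (c:ℂ))^(n+1)‖ ≤ g τ := by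
    intro τ hτ
    have hτc : c < τ := hτ
    have hτ0 : 0 < τ := lt_of_le_of_lt hc hτc
    rw [norm_mul, norm_mul, Complex.norm_exp, hre]
    rw [show ((τ:ℂ) - (c:ℂ)) = ((τ - c : ℝ) : ℂ) by push_cast; ring,
      Complex.norm_real, norm_pow, Complex.norm_real, Real.norm_eq_abs, Real.norm_eq_abs,
      abs_of_pos hτ0, abs_of_nonneg (by linarith : (0:ℝ) ≤ τ - c)]
    show rexp (-b * τ^2) * τ * (τ - c)^(n+1) ≤ τ ^ ((n:ℝ)+2) * rexp (-b * τ^2)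
    rw [show ((n:ℝ)+2) = ((n+2:ℕ):ℝ) by push_cast; ring, Real.rpow_natCast]
    calc rexp (-b * τ^2) * τ * (τ - c)^(n+1) ≤ rexp (-b * τ^2) * τ * τ^(n+1) := by
          gcongr
          · linarith
      _ = τ^(n+2) * rexp (-b * τ^2) := by ring
  -- integral bound
  have hIb : ‖∫ τ in Ioi c, Complex.exp (-(τ:ℂ)^2/(4*z)) * (τ:ℂ) * ((τ:ℂ)-(c:ℂ))^(n+1)‖
      ≤ ∫ x in Ioi (0:ℝ), g x := by
    refine le_trans (norm_integral_le_of_norm_le hgint.integrableOn ?_) ?_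
    · filter_upwards [ae_restrict_mem measurableSet_Ioi] with τ hτ using hnorm τ hτ
    · refine setIntegral_mono_set hgint.integrableOn ?_
        (HasSubset.Subset.eventuallyLE (Ioi_subset_Ioi hc))
      filter_upwards [ae_restrict_mem measurableSet_Ioi] with x hx
      exact mul_nonneg (Real.rpow_nonneg (le_of_lt hx) _) (Real.exp_pos _).le
  -- integral value
  have hval : ∫ x in Ioi (0:ℝ), g x
      = b ^ (-((n:ℝ)+3)/2) * (1/2) * Real.Gamma (((n:ℝ)+3)/2) := by
    have h := integral_rpow_mul_exp_neg_mul_rpow (p := 2) (q := (n:ℝ)+2) two_pos hn2 hb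
    simp_rw [Real.rpow_two] at h
    rw [show ((n:ℝ)+2+1) = ((n:ℝ)+3) by ring] at h
    exact h
  set u : ℝ := ‖z‖^2 / z.re with hudef
  have hu : 0 < u := by positivity
  have hbu : b = (4*u)⁻¹ := by rw [hbdef, hudef]; field_simp
  have hG : 0 < Real.Gamma (1 + (n:ℝ)/2) := Real.Gamma_pos_of_pos (by positivity)
  have hS : 0 < Real.sqrt Real.pi := Real.sqrt_pos.mpr Real.pi_pos
  have hF : (0:ℝ) < (Nat.factorial (n+1) : ℝ) := by positivity
  set T : ℝ := 2 ^ (n:ℝ) with hTdef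
  have hT : (0:ℝ) < T := Real.rpow_pos_of_pos (by norm_num) _
  have e1 : b ^ (-((n:ℝ)+3)/2) = 8 * 2 ^ (n:ℝ) * u ^ ((3:ℝ)/2) * u ^ ((n:ℝ)/2) := by
    rw [hbu, show (-((n:ℝ)+3)/2) = -(((n:ℝ)+3)/2) by ring, Real.inv_rpow (by positivity),
      ← Real.rpow_neg (by positivity), neg_neg, Real.mul_rpow (by norm_num) hu.le,
      show (4:ℝ) = (2:ℝ)^(2:ℝ) from by rw [Real.rpow_two]; norm_num,
      ← Real.rpow_mul (by norm_num : (0:ℝ) ≤ 2),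
      show (2:ℝ) * (((n:ℝ)+3)/2) = (n:ℝ) + 3 by ring,
      Real.rpow_add (by norm_num : (0:ℝ) < 2),
      show (((n:ℝ)+3)/2) = (3:ℝ)/2 + (n:ℝ)/2 by ring, Real.rpow_add hu]
    norm_num
    ring
  have e2 : Real.Gamma (((n:ℝ)+3)/2)
      = (Nat.factorial (n+1):ℝ) * (2 * 2^(n:ℝ))⁻¹ * Real.sqrt Real.pi
        / Real.Gamma (1 + (n:ℝ)/2) := by
    have hga := gamma_aux n
    have h2n : (2:ℝ) ^ (-(n:ℝ)-1) = (2 * 2^(n:ℝ))⁻¹ := by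
      rw [show -(n:ℝ)-1 = -((n:ℝ)+1) by ring, Real.rpow_neg (by norm_num),
        Real.rpow_add (by norm_num : (0:ℝ) < 2), Real.rpow_one]
      ring
    rw [h2n] at hga
    rw [eq_div_iff hG.ne', mul_comm]
    exact hga
  have e3 : (‖z‖/z.re) ^ ((3:ℝ)/2) = u ^ ((3:ℝ)/2) / ‖z‖ ^ ((3:ℝ)/2) := by
    rw [show ‖z‖ / z.re = u / ‖z‖ from by
        rw [hudef, div_div, div_eq_div_iff hz.ne' (by positivity)]; ring,
      Real.div_rpow hu.le (le_of_lt ha)]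
  have e4 : ‖z‖ ^ (-(3:ℝ)/2) = (‖z‖ ^ ((3:ℝ)/2))⁻¹ := by
    rw [show -(3:ℝ)/2 = -((3:ℝ)/2) by ring, Real.rpow_neg ha.le]
  have hA : 0 < ‖z‖ ^ ((3:ℝ)/2) := Real.rpow_pos_of_pos ha _
  have hformula : ‖z‖ ^ (-(3:ℝ)/2) / (2 * Real.sqrt Real.pi * (Nat.factorial (n+1):ℝ)) *
      (b ^ (-((n:ℝ)+3)/2) * (1/2) * Real.Gamma (((n:ℝ)+3)/2))
      = (‖z‖ / z.re) ^ ((3:ℝ)/2) * (u ^ ((n:ℝ)/2) / Real.Gamma (1 + (n:ℝ)/2)) := by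
    rw [e1, e2, e3, e4]
    have hT2 := hT
    rw [hTdef] at hT2
    generalize hg2 : (2:ℝ)^(n:ℝ) = T2 at hT2 ⊢
    generalize u ^ ((3:ℝ)/2) = P3
    generalize u ^ ((n:ℝ)/2) = PN
    generalize hgA : ‖z‖ ^ ((3:ℝ)/2) = A at hA ⊢
    generalize hgG : Real.Gamma (1 + (n:ℝ)/2) = G at hG ⊢
    generalize hgS : Real.sqrt Real.pi = S at hS ⊢
    generalize hgF : ((Nat.factorial (n+1)) : ℝ) = F at hF ⊢
    field_simp
    ring
  have hpref : ‖z ^ (-(3:ℂ)/2) / (2 * (Real.sqrt Real.pi : ℂ) * ((Nat.factorial (n+1) : ℕ) : ℂ))‖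
      = ‖z‖ ^ (-(3:ℝ)/2) / (2 * Real.sqrt Real.pi * (Nat.factorial (n+1):ℝ)) := by
    rw [norm_div]
    congr 1
    · rw [show (-(3:ℂ)/2) = ((-(3:ℝ)/2 : ℝ) : ℂ) by norm_num,
        Complex.norm_cpow_real]
    · rw [norm_mul, norm_mul]
      simp [Complex.norm_real, abs_of_nonneg (Real.sqrt_nonneg _)]
  rw [phiC, norm_mul, hpref]
  refine le_trans (mul_le_mul_of_nonneg_left hIb (by positivity)) ?_
  rw [hval]
  exact le_of_eq hformula

/-- On a compact subset `K` of the open right half-plane there is `M > 0` with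
`|φ_n(z;c)| < M u^{n/2}/Γ(1 + n/2)` for all `z ∈ K`, `c ≥ 0`, `n ≥ 0`, where
`u = |z|²/Re z`. -/
theorem phiC_uniform_bound_on_compacts
    (K : Set ℂ) (hK : IsCompact K) (hKsub : K ⊆ {z : ℂ | 0 < z.re}) :
    ∃ M > (0 : ℝ), ∀ z ∈ K, ∀ c : ℝ, 0 ≤ c → ∀ n : ℕ,
      ‖phiC n c z‖ < M * (‖z‖ ^ 2 / z.re) ^ ((n : ℝ) / 2) / Real.Gamma (1 + (n : ℝ) / 2) := by
  have hcont : ContinuousOn (fun z : ℂ => (‖z‖ / z.re) ^ ((3:ℝ)/2)) K := by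
    apply ContinuousOn.rpow_const
    · exact (continuous_norm.continuousOn).div (Complex.continuous_re.continuousOn)
        (fun z hz => (hKsub hz).ne')
    · intro z hz; right; norm_num
  obtain ⟨B, hB⟩ := hK.exists_bound_of_continuousOn hcont
  refine ⟨max B 0 + 1, by positivity, fun z hz c hc n => ?_⟩
  have hzre : 0 < z.re := hKsub hz
  have hz0 : z ≠ 0 := fun h => by simp [h] at hzre
  have ha : (0:ℝ) < ‖z‖ := norm_pos_iff.mpr hz0
  have hG : 0 < Real.Gamma (1 + (n:ℝ)/2) := Real.Gamma_pos_of_pos (by positivity)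
  have hX : 0 < (‖z‖^2/z.re) ^ ((n:ℝ)/2) / Real.Gamma (1 + (n:ℝ)/2) := by positivity
  have h1 := phiC_le z hzre hc n
  have h2 : (‖z‖ / z.re) ^ ((3:ℝ)/2) ≤ max B 0 := by
    calc (‖z‖ / z.re) ^ ((3:ℝ)/2) ≤ ‖(‖z‖ / z.re) ^ ((3:ℝ)/2)‖ := le_norm_self _
      _ ≤ B := hB z hz
      _ ≤ max B 0 := le_max_left _ _
  calc ‖phiC n c z‖
      ≤ (‖z‖ / z.re) ^ ((3:ℝ)/2) * ((‖z‖^2/z.re) ^ ((n:ℝ)/2) / Real.Gamma (1 + (n:ℝ)/2)) := h1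
    _ ≤ (max B 0) * ((‖z‖^2/z.re) ^ ((n:ℝ)/2) / Real.Gamma (1 + (n:ℝ)/2)) :=
        mul_le_mul_of_nonneg_right h2 hX.le
    _ < (max B 0 + 1) * ((‖z‖^2/z.re) ^ ((n:ℝ)/2) / Real.Gamma (1 + (n:ℝ)/2)) :=
        mul_lt_mul_of_pos_right (by linarith) hX
    _ = (max B 0 + 1) * (‖z‖^2/z.re) ^ ((n:ℝ)/2) / Real.Gamma (1 + (n:ℝ)/2) := by ring
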